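/- Let n ≥ 3 and let A be a symmetric n×n matrix with exactly two distinct eigenvalues, the smaller one λ having multiplicity one. If an eigenvector of A corresponding to λ belongs to the dual cone K* of a subdual proper cone K, then μ I_n - A is K-copositive, where μ is the larger eigenvalue; consequently q_A(x) = ⟨Ax,x⟩ is spherically quasi-convex on S^{n-1} ∩ int(K). -/

import Mathlib

open RealInnerProductSpace


noncomputable def geo {n : ℕ} (x y : EuclideanSpace ℝ (Fin n)) (t : ℝ) :
    EuclideanSpace ℝ (Fin n) :=
  (Real.cos (t * Real.arccos ⟪x, y⟫) -
      ⟪x, y⟫ * Real.sin (t * Real.arccos ⟪x, y⟫) / Real.sqrt (1 - ⟪x, y⟫ ^ 2)) • x +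
    (Real.sin (t * Real.arccos ⟪x, y⟫) / Real.sqrt (1 - ⟪x, y⟫ ^ 2)) • y

def IsMinimalGeodesic {n : ℕ} (γ : ℝ → EuclideanSpace ℝ (Fin n)) : Prop :=
  (∃ x y : EuclideanSpace ℝ (Fin n), ‖x‖ = 1 ∧ ‖y‖ = 1 ∧ y ≠ x ∧ y ≠ -x ∧
      ∀ t, γ t = geo x y t) ∨
  (∃ x v : EuclideanSpace ℝ (Fin n), ‖x‖ = 1 ∧ ‖v‖ = 1 ∧ ⟪x, v⟫ = 0 ∧
      ∀ t, γ t = Real.cos (Real.pi * t) • x + Real.sin (Real.pi * t) • v)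

def SphericallyConvex {n : ℕ} (S : Set (EuclideanSpace ℝ (Fin n))) : Prop :=
  ∀ γ : ℝ → EuclideanSpace ℝ (Fin n), IsMinimalGeodesic γ → γ 0 ∈ S → γ 1 ∈ S →
    ∀ t ∈ Set.Icc (0 : ℝ) 1, γ t ∈ S

def SphQuasiconvexOn {n : ℕ} (S : Set (EuclideanSpace ℝ (Fin n)))
    (f : EuclideanSpace ℝ (Fin n) → ℝ) : Prop :=
  ∀ γ : ℝ → EuclideanSpace ℝ (Fin n), IsMinimalGeodesic γ →
    (∀ t ∈ Set.Icc (0 : ℝ) 1, γ t ∈ S) →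
    ∀ t ∈ Set.Icc (0 : ℝ) 1, f (γ t) ≤ max (f (γ 0)) (f (γ 1))


lemma trig_min_le (a b c : ℝ)
    (hpos : ∀ t ∈ Set.Icc (0:ℝ) 1, 0 ≤ a * Real.cos (c * t) + b * Real.sin (c * t)) :
    ∀ t ∈ Set.Icc (0:ℝ) 1,
      min (a * Real.cos (c * 0) + b * Real.sin (c * 0))
        (a * Real.cos (c * 1) + b * Real.sin (c * 1))
        ≤ a * Real.cos (c * t) + b * Real.sin (c * t) := by
  set h : ℝ → ℝ := fun t => a * Real.cos (c * t) + b * Real.sin (c * t) with hh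
  have h1 : ∀ t : ℝ, HasDerivAt (fun t : ℝ => c * t) c t := fun t => by
    simpa using (hasDerivAt_id t).const_mul c
  have hd : ∀ t : ℝ, HasDerivAt h (-(a*c) * Real.sin (c*t) + (b*c) * Real.cos (c*t)) t := by
    intro t
    have hcos := (Real.hasDerivAt_cos (c*t)).comp t (h1 t)
    have hsin := (Real.hasDerivAt_sin (c*t)).comp t (h1 t)
    have := (hcos.const_mul a).add (hsin.const_mul b)
    exact this.congr_deriv (by ring)
  set h' : ℝ → ℝ := fun t => -(a*c) * Real.sin (c*t) + (b*c) * Real.cos (c*t) with hh'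
  have hd' : ∀ t : ℝ, HasDerivAt h' (-(c^2) * h t) t := by
    intro t
    have hcos := (Real.hasDerivAt_cos (c*t)).comp t (h1 t)
    have hsin := (Real.hasDerivAt_sin (c*t)).comp t (h1 t)
    have := (hsin.const_mul (-(a*c))).add (hcos.const_mul (b*c))
    exact this.congr_deriv (by simp only [hh]; ring)
  have hconc : ConcaveOn ℝ (Set.Icc (0:ℝ) 1) h := by
    refine concaveOn_of_hasDerivWithinAt2_nonpos (convex_Icc 0 1)
      (f' := h') (f'' := fun t => -(c^2) * h t)
      (Continuous.continuousOn (by fun_prop))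
      (fun x _ => (hd x).hasDerivWithinAt)
      (fun x _ => (hd' x).hasDerivWithinAt) ?_
    intro x hx
    rw [interior_Icc] at hx
    show -c ^ 2 * h x ≤ 0
    have hpx : 0 ≤ h x := hpos x ⟨hx.1.le, hx.2.le⟩
    nlinarith [mul_nonneg (sq_nonneg c) hpx]
  intro t ht
  have key := hconc.2 (Set.left_mem_Icc.2 zero_le_one) (Set.right_mem_Icc.2 zero_le_one)
    (by linarith [ht.2] : (0:ℝ) ≤ 1 - t) ht.1 (by ring)
  have h01 : (1 - t) • (0:ℝ) + t • (1:ℝ) = t := by simp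
  rw [h01] at key
  have e0 : h 0 = a * Real.cos (c * 0) + b * Real.sin (c * 0) := rfl
  have e1 : h 1 = a * Real.cos (c * 1) + b * Real.sin (c * 1) := rfl
  have et : h t = a * Real.cos (c * t) + b * Real.sin (c * t) := rfl
  rw [← e0, ← e1, ← et]
  have hm0 : min (h 0) (h 1) ≤ h 0 := min_le_left _ _
  have hm1 : min (h 0) (h 1) ≤ h 1 := min_le_right _ _
  have ht0 : (0:ℝ) ≤ 1 - t := by linarith [ht.2]
  calc min (h 0) (h 1) = (1 - t) * min (h 0) (h 1) + t * min (h 0) (h 1) := by ring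
    _ ≤ (1 - t) * h 0 + t * h 1 := by
        have := ht.1
        gcongr
    _ ≤ h t := by simpa using key

theorem stmt17 (n : ℕ) (hn : 3 ≤ n) (K : Set (EuclideanSpace ℝ (Fin n)))
    (hclosed : IsClosed K) (hconv : Convex ℝ K)
    (hcone : ∀ c : ℝ, 0 < c → ∀ x ∈ K, c • x ∈ K)
    (hpointed : K ∩ (-K) ⊆ {0}) (hint : (interior K).Nonempty)
    (hsubdual : ∀ x ∈ K, ∀ y ∈ K, 0 ≤ ⟪x, y⟫)
    (A : EuclideanSpace ℝ (Fin n) →ₗ[ℝ] EuclideanSpace ℝ (Fin n))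
    (hsymm : ∀ x y, ⟪A x, y⟫ = ⟪x, A y⟫)
    (lam mu : ℝ) (hlt : lam < mu)
    (v1 : EuclideanSpace ℝ (Fin n)) (hv1 : ‖v1‖ = 1) (heig : A v1 = lam • v1)
    (hrest : ∀ x, ⟪v1, x⟫ = 0 → A x = mu • x)
    (hdualmem : ∀ x ∈ K, 0 ≤ ⟪x, v1⟫) :
    (∀ x ∈ K, 0 ≤ mu * ‖x‖ ^ 2 - ⟪A x, x⟫) ∧
      SphQuasiconvexOn
        (Metric.sphere (0 : EuclideanSpace ℝ (Fin n)) 1 ∩ interior K)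
        (fun x => ⟪A x, x⟫) := by
  have hinnself : ⟪v1, v1⟫ = (1:ℝ) := by
    rw [real_inner_self_eq_norm_sq, hv1]; norm_num
  have hquad : ∀ x : EuclideanSpace ℝ (Fin n),
      ⟪A x, x⟫ = mu * ‖x‖^2 - (mu - lam) * ⟪v1, x⟫^2 := by
    intro x
    set cx := (⟪v1, x⟫ : ℝ) with hcx
    have hw : ⟪v1, x - cx • v1⟫ = (0:ℝ) := by
      rw [inner_sub_right, real_inner_smul_right, hinnself]; ring
    have hAx : A x = mu • (x - cx • v1) + (cx * lam) • v1 := by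
      have hsplit : A x = A (x - cx • v1) + cx • A v1 := by
        rw [← map_smul, ← map_add]; congr 1; abel
      rw [hsplit, hrest _ hw, heig, smul_smul]
    rw [hAx]
    simp only [inner_add_left, inner_sub_left, real_inner_smul_left,
      real_inner_self_eq_norm_sq]
    rw [← hcx]
    ring
  constructor
  · intro x hx
    have hq := hquad x
    have hs := sq_nonneg (⟪v1, x⟫ : ℝ)
    nlinarith
  · intro γ hγ hγS
    have key : ∀ a b c : ℝ,
        (∀ t : ℝ, ⟪v1, γ t⟫ = a * Real.cos (c * t) + b * Real.sin (c * t)) →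
        ∀ t ∈ Set.Icc (0:ℝ) 1,
          (fun x => (⟪A x, x⟫ : ℝ)) (γ t) ≤
            max ((fun x => (⟪A x, x⟫ : ℝ)) (γ 0)) ((fun x => (⟪A x, x⟫ : ℝ)) (γ 1)) := by
      intro a b c hab t ht
      have h0 : (0:ℝ) ∈ Set.Icc (0:ℝ) 1 := ⟨le_refl _, zero_le_one⟩
      have h1 : (1:ℝ) ∈ Set.Icc (0:ℝ) 1 := ⟨zero_le_one, le_refl _⟩
      have hnorm : ∀ s ∈ Set.Icc (0:ℝ) 1, ‖γ s‖ = 1 := fun s hs => by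
        have := (hγS s hs).1
        simpa [mem_sphere_iff_norm] using this
      have hposg : ∀ s ∈ Set.Icc (0:ℝ) 1,
          0 ≤ a * Real.cos (c * s) + b * Real.sin (c * s) := fun s hs => by
        rw [← hab s, real_inner_comm]
        exact hdualmem _ (interior_subset (hγS s hs).2)
      have hmin := trig_min_le a b c hposg t ht
      rw [← hab 0, ← hab 1, ← hab t] at hmin
      have hg0 : (0:ℝ) ≤ ⟪v1, γ 0⟫ := by rw [hab 0]; exact hposg 0 h0
      have hg1 : (0:ℝ) ≤ ⟪v1, γ 1⟫ := by rw [hab 1]; exact hposg 1 h1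
      simp only
      rw [hquad (γ t), hquad (γ 0), hquad (γ 1), hnorm t ht, hnorm 0 h0, hnorm 1 h1]
      rcases le_total (⟪v1, γ 0⟫ : ℝ) ⟪v1, γ 1⟫ with hc | hc
      · refine le_trans ?_ (le_max_left _ _)
        rw [min_eq_left hc] at hmin
        nlinarith [mul_self_le_mul_self hg0 hmin, hlt]
      · refine le_trans ?_ (le_max_right _ _)
        rw [min_eq_right hc] at hmin
        nlinarith [mul_self_le_mul_self hg1 hmin, hlt]
    rcases hγ with ⟨x, y, hx, hy, _, _, hγeq⟩ | ⟨x, v, hx, hv, hxv, hγeq⟩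
    · refine key ⟪v1, x⟫
        ((⟪v1, y⟫ - ⟪x, y⟫ * ⟪v1, x⟫) / Real.sqrt (1 - ⟪x, y⟫ ^ 2))
        (Real.arccos ⟪x, y⟫) (fun t => ?_) 
      rw [hγeq t]
      simp only [geo, inner_add_right, real_inner_smul_right, mul_comm t]
      ring
    · refine key ⟪v1, x⟫ ⟪v1, v⟫ Real.pi (fun t => ?_)
      rw [hγeq t]
      simp only [inner_add_right, real_inner_smul_right]
      ring
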